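/- The five-point set consisting of the four vertices of a square together with its center determines exactly two distinct angle values in (0,π), namely π/4 and π/2. -/

import Mathlib

open EuclideanGeometry

noncomputable section

abbrev Pt : Type := EuclideanSpace ℝ (Fin 2)

/-- The point (x, y) in the Euclidean plane. -/
def pt (x y : ℝ) : Pt := (WithLp.equiv 2 (Fin 2 → ℝ)).symm ![x, y]

/-- The set of distinct angle values in (0, π) determined by a planar point set. -/
def angleSet (P : Set Pt) : Set ℝ :=
  {θ : ℝ | θ ∈ Set.Ioo 0 Real.pi ∧
    ∃ x ∈ P, ∃ y ∈ P, ∃ z ∈ P, x ≠ y ∧ y ≠ z ∧ x ≠ z ∧ ∠ x y z = θ}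

lemma angle_pt (a b c d e f : ℝ) :
    ∠ (pt a b) (pt c d) (pt e f) =
      Real.arccos (((a-c)*(e-c)+(b-d)*(f-d)) /
        (Real.sqrt ((a-c)^2+(b-d)^2) * Real.sqrt ((e-c)^2+(f-d)^2))) := by
  rw [EuclideanGeometry.angle, InnerProductGeometry.angle]
  congr 1
  simp [pt, PiLp.inner_apply, EuclideanSpace.norm_eq, Fin.sum_univ_two]
  ring

lemma sqrt_mul_sqrt (s t : ℝ) (hs : 0 ≤ s) : Real.sqrt s * Real.sqrt t = Real.sqrt (s*t) :=
  (Real.sqrt_mul hs t).symm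

lemma arccos_pi4 (p s t : ℝ) (hp : 0 < p) (hs : 0 ≤ s) (h : 2*p^2 = s*t) :
    Real.arccos (p / (Real.sqrt s * Real.sqrt t)) = Real.pi/4 := by
  rw [sqrt_mul_sqrt s t hs, ← h,
    Real.sqrt_mul (by norm_num : (0:ℝ) ≤ 2), Real.sqrt_sq hp.le]
  have : p / (Real.sqrt 2 * p) = Real.sqrt 2 / 2 := by
    rw [div_eq_div_iff (by positivity) (by norm_num)]
    have h2 := Real.sq_sqrt (show (0:ℝ) ≤ 2 by norm_num)
    nlinarith [Real.sqrt_nonneg 2]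
  rw [this, ← Real.cos_pi_div_four, Real.arccos_cos (by positivity)
    (by linarith [Real.pi_pos])]

lemma arccos_pi2 (p s t : ℝ) (hp : p = 0) :
    Real.arccos (p / (Real.sqrt s * Real.sqrt t)) = Real.pi/2 := by
  rw [hp, zero_div, Real.arccos_zero]

lemma arccos_is_zero (p s t : ℝ) (hp : 0 < p) (hs : 0 ≤ s) (h : p^2 = s*t) :
    Real.arccos (p / (Real.sqrt s * Real.sqrt t)) = 0 := by
  rw [sqrt_mul_sqrt s t hs, ← h, Real.sqrt_sq hp.le, div_self hp.ne', Real.arccos_one]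

lemma arccos_is_pi (p s t : ℝ) (hp : p < 0) (hs : 0 ≤ s) (h : p^2 = s*t) :
    Real.arccos (p / (Real.sqrt s * Real.sqrt t)) = Real.pi := by
  rw [sqrt_mul_sqrt s t hs, ← h, Real.sqrt_sq_eq_abs, abs_of_neg hp,
    div_neg, div_self hp.ne, Real.arccos_neg_one]

lemma ang_not_mem_zero (p s t θ : ℝ)
    (h : Real.arccos (p / (Real.sqrt s * Real.sqrt t)) = θ)
    (hp : 0 < p) (hs : 0 ≤ s) (hst : p^2 = s*t) : θ ∉ Set.Ioo 0 Real.pi := by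
  intro hmem
  rw [arccos_is_zero p s t hp hs hst] at h
  rw [← h] at hmem
  exact absurd hmem.1 (lt_irrefl 0)

lemma ang_not_mem_pi (p s t θ : ℝ)
    (h : Real.arccos (p / (Real.sqrt s * Real.sqrt t)) = θ)
    (hp : p < 0) (hs : 0 ≤ s) (hst : p^2 = s*t) : θ ∉ Set.Ioo 0 Real.pi := by
  intro hmem
  rw [arccos_is_pi p s t hp hs hst] at h
  rw [← h] at hmem
  exact absurd hmem.2 (lt_irrefl _)

lemma pt_ne1 {a b c d : ℝ} (h : a ≠ c) : pt a b ≠ pt c d := by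
  intro he
  have : (pt a b) 0 = (pt c d) 0 := by rw [he]
  exact h this

lemma pt_ne2 {a b c d : ℝ} (h : b ≠ d) : pt a b ≠ pt c d := by
  intro he
  have : (pt a b) 1 = (pt c d) 1 := by rw [he]
  exact h this

theorem stmt11 :
    angleSet {pt 0 0, pt 1 0, pt 1 1, pt 0 1, pt (1/2) (1/2)} =
      {Real.pi / 4, Real.pi / 2} := by
  ext θ
  simp only [angleSet, Set.mem_setOf_eq, Set.mem_insert_iff, Set.mem_singleton_iff]
  constructor
  · rintro ⟨hθ, x, hx, y, hy, z, hz, hxy, hyz, hxz, hangle⟩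
    rcases hx with rfl|rfl|rfl|rfl|rfl <;> rcases hy with rfl|rfl|rfl|rfl|rfl <;>
      rcases hz with rfl|rfl|rfl|rfl|rfl <;>
    first
    | exact absurd rfl hxy
    | exact absurd rfl hyz
    | exact absurd rfl hxz
    | (refine Or.inl ?_; rw [← hangle, angle_pt];
       refine arccos_pi4 _ _ _ ?_ ?_ ?_ <;> (norm_num; done))
    | (refine Or.inr ?_; rw [← hangle, angle_pt];
       refine arccos_pi2 _ _ _ ?_; norm_num; done)
    | (refine absurd hθ (ang_not_mem_zero _ _ _ _
        ((angle_pt _ _ _ _ _ _).symm.trans hangle) ?_ ?_ ?_) <;> (norm_num; done))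
    | (refine absurd hθ (ang_not_mem_pi _ _ _ _
        ((angle_pt _ _ _ _ _ _).symm.trans hangle) ?_ ?_ ?_) <;> (norm_num; done))
  · rintro (rfl|rfl)
    · refine ⟨⟨by positivity, by linarith [Real.pi_pos]⟩,
        pt 1 0, by simp, pt 0 0, by simp, pt 1 1, by simp,
        pt_ne1 (by norm_num), pt_ne1 (by norm_num), pt_ne2 (by norm_num), ?_⟩
      rw [angle_pt]
      exact arccos_pi4 _ _ _ (by norm_num) (by norm_num) (by norm_num)
    · refine ⟨⟨by positivity, by linarith [Real.pi_pos]⟩,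
        pt 1 0, by simp, pt 0 0, by simp, pt 0 1, by simp,
        pt_ne1 (by norm_num), pt_ne2 (by norm_num), pt_ne1 (by norm_num), ?_⟩
      rw [angle_pt]
      exact arccos_pi2 _ _ _ (by norm_num)
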